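/- Let $C_{AB}^C$ be the structure constants of a real Lie algebra $\mathfrak{g}$ with basis split as $\{e_a\}\cup\{e_\alpha\}$, where $\mathfrak{h}=\mathrm{span}\{e_\alpha\}$ is a subalgebra, and let $G_{ab}$ be a symmetric nondegenerate matrix satisfying $G_{ab}C_{c\alpha}^a + G_{ac}C_{b\alpha}^a = 0$. Define $\Gamma^a_{bc} = -\tfrac12 C^a_{bc} - \tfrac12 G^{ad}(G_{ec}C^e_{bd} + G_{eb}C^e_{cd})$. Then for all indices $\alpha, a, b, c$: $C_{\alpha e}^{c}\Gamma_{ba}^{e} = C_{\alpha a}^{e}\Gamma_{be}^{c} + C_{\alpha b}^{e}\Gamma_{ea}^{c} + C_{\alpha a}^{\beta}C_{\beta b}^{c}$, where $e$ runs over the $\mathfrak{m}$-indices and $\beta$ over the $\mathfrak{h}$-indices. -/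
import Mathlib
open Finset

section aux
set_option linter.unusedSectionVars false
variable {I J : Type*} [Fintype I] [Fintype J]

/-- bracket with lowered third index -/
def LL (G : I → I → ℝ) (C : (I ⊕ J) → (I ⊕ J) → (I ⊕ J) → ℝ) (y z x : I) : ℝ :=
  ∑ u, G u x * C (Sum.inl y) (Sum.inl z) (Sum.inl u)

/-- lowered adjoint action of 𝔥 -/
def FF (G : I → I → ℝ) (C : (I ⊕ J) → (I ⊕ J) → (I ⊕ J) → ℝ) (β : J) (x y : I) : ℝ :=
  ∑ u, C (Sum.inr β) (Sum.inl x) (Sum.inl u) * G u y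

lemma LL_anti (G : I → I → ℝ) (C : (I ⊕ J) → (I ⊕ J) → (I ⊕ J) → ℝ)
    (hanti : ∀ X Y Z, C X Y Z = - C Y X Z) (y z x : I) :
    LL G C y z x = - LL G C z y x := by
  unfold LL
  rw [← Finset.sum_neg_distrib]
  refine Finset.sum_congr rfl fun u _ => ?_
  rw [hanti (Sum.inl y) (Sum.inl z) (Sum.inl u)]
  ring

lemma FF_anti (G : I → I → ℝ) (C : (I ⊕ J) → (I ⊕ J) → (I ⊕ J) → ℝ)
    (hanti : ∀ X Y Z, C X Y Z = - C Y X Z)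
    (hAdH : ∀ (b c : I) (α : J), ∑ a, (G a b * C (Sum.inl c) (Sum.inr α) (Sum.inl a)
      + G a c * C (Sum.inl b) (Sum.inr α) (Sum.inl a)) = 0)
    (β : J) (x y : I) : FF G C β x y = - FF G C β y x := by
  have h := hAdH x y β
  have h2 : ∀ u : I, G u x * C (Sum.inl y) (Sum.inr β) (Sum.inl u)
      + G u y * C (Sum.inl x) (Sum.inr β) (Sum.inl u)
      = -(C (Sum.inr β) (Sum.inl y) (Sum.inl u) * G u x)
        + -(C (Sum.inr β) (Sum.inl x) (Sum.inl u) * G u y) := by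
    intro u
    rw [hanti (Sum.inl y) (Sum.inr β) (Sum.inl u), hanti (Sum.inl x) (Sum.inr β) (Sum.inl u)]
    ring
  rw [Finset.sum_congr rfl fun u _ => h2 u, Finset.sum_add_distrib,
    Finset.sum_neg_distrib, Finset.sum_neg_distrib] at h
  unfold FF
  linarith

/-- lowered Jacobi identity -/
lemma lemJac (C : (I ⊕ J) → (I ⊕ J) → (I ⊕ J) → ℝ)
    (hanti : ∀ X Y Z, C X Y Z = - C Y X Z)
    (hjac : ∀ X Y Z W, ∑ V, (C X Y V * C V Z W + C Y Z V * C V X W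
      + C Z X V * C V Y W) = 0)
    (hsub : ∀ (α β : J) (a : I), C (Sum.inr α) (Sum.inr β) (Sum.inl a) = 0)
    (G : I → I → ℝ) (hGsym : ∀ a b, G a b = G b a)
    (hAdH : ∀ (b c : I) (α : J), ∑ a, (G a b * C (Sum.inl c) (Sum.inr α) (Sum.inl a)
      + G a c * C (Sum.inl b) (Sum.inr α) (Sum.inl a)) = 0)
    (α : J) (x y z : I) :
    (∑ e, C (Sum.inr α) (Sum.inl x) (Sum.inl e) * LL G C e y z)
      - (∑ e, C (Sum.inr α) (Sum.inl y) (Sum.inl e) * LL G C e x z)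
      + (∑ e, C (Sum.inr α) (Sum.inl z) (Sum.inl e) * LL G C x y e)
      + (∑ β, (C (Sum.inr α) (Sum.inl x) (Sum.inr β) * FF G C β y z
          - C (Sum.inr α) (Sum.inl y) (Sum.inr β) * FF G C β x z)) = 0 := by
  have h0 : ∑ aa : I, ∑ V : I ⊕ J, G aa z * (C (Sum.inr α) (Sum.inl x) V * C V (Sum.inl y) (Sum.inl aa)
      + C (Sum.inl x) (Sum.inl y) V * C V (Sum.inr α) (Sum.inl aa)
      + C (Sum.inl y) (Sum.inr α) V * C V (Sum.inl x) (Sum.inl aa)) = 0 := by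
    refine Finset.sum_eq_zero fun aa _ => ?_
    rw [← Finset.mul_sum, hjac (Sum.inr α) (Sum.inl x) (Sum.inl y) (Sum.inl aa), mul_zero]
  rw [Finset.sum_comm] at h0
  rw [Fintype.sum_sum_type] at h0
  have hI : (∑ e : I, ∑ aa : I, G aa z * (C (Sum.inr α) (Sum.inl x) (Sum.inl e) * C (Sum.inl e) (Sum.inl y) (Sum.inl aa)
        + C (Sum.inl x) (Sum.inl y) (Sum.inl e) * C (Sum.inl e) (Sum.inr α) (Sum.inl aa)
        + C (Sum.inl y) (Sum.inr α) (Sum.inl e) * C (Sum.inl e) (Sum.inl x) (Sum.inl aa)))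
      = (∑ e, C (Sum.inr α) (Sum.inl x) (Sum.inl e) * LL G C e y z)
        - (∑ e, C (Sum.inr α) (Sum.inl y) (Sum.inl e) * LL G C e x z)
        + (∑ e, C (Sum.inr α) (Sum.inl z) (Sum.inl e) * LL G C x y e) := by
    have step1 : ∀ e : I, (∑ aa : I, G aa z * (C (Sum.inr α) (Sum.inl x) (Sum.inl e) * C (Sum.inl e) (Sum.inl y) (Sum.inl aa)
        + C (Sum.inl x) (Sum.inl y) (Sum.inl e) * C (Sum.inl e) (Sum.inr α) (Sum.inl aa)
        + C (Sum.inl y) (Sum.inr α) (Sum.inl e) * C (Sum.inl e) (Sum.inl x) (Sum.inl aa)))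
        = C (Sum.inr α) (Sum.inl x) (Sum.inl e) * LL G C e y z
          - C (Sum.inr α) (Sum.inl y) (Sum.inl e) * LL G C e x z
          - C (Sum.inl x) (Sum.inl y) (Sum.inl e) * FF G C α e z := by
      intro e
      unfold LL FF
      rw [Finset.mul_sum, Finset.mul_sum, Finset.mul_sum, ← Finset.sum_sub_distrib,
        ← Finset.sum_sub_distrib]
      refine Finset.sum_congr rfl fun u _ => ?_
      rw [hanti (Sum.inl e) (Sum.inr α) (Sum.inl u), hanti (Sum.inl y) (Sum.inr α) (Sum.inl e)]
      ring
    have hM : ∑ e, C (Sum.inl x) (Sum.inl y) (Sum.inl e) * FF G C α e z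
        = - ∑ e, C (Sum.inr α) (Sum.inl z) (Sum.inl e) * LL G C x y e := by
      have h1 : ∀ e : I, C (Sum.inl x) (Sum.inl y) (Sum.inl e) * FF G C α e z
          = -(C (Sum.inl x) (Sum.inl y) (Sum.inl e) * FF G C α z e) := by
        intro e
        rw [FF_anti G C hanti hAdH α e z]
        ring
      rw [Finset.sum_congr rfl fun e _ => h1 e, Finset.sum_neg_distrib, neg_inj]
      unfold FF LL
      simp only [Finset.mul_sum]
      rw [Finset.sum_comm]
      refine Finset.sum_congr rfl fun i _ => Finset.sum_congr rfl fun j _ => ?_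
      rw [hGsym j i]
      ring
    rw [Finset.sum_congr rfl fun e _ => step1 e, Finset.sum_sub_distrib, Finset.sum_sub_distrib,
      hM]
    ring
  have hJ : (∑ β : J, ∑ aa : I, G aa z * (C (Sum.inr α) (Sum.inl x) (Sum.inr β) * C (Sum.inr β) (Sum.inl y) (Sum.inl aa)
        + C (Sum.inl x) (Sum.inl y) (Sum.inr β) * C (Sum.inr β) (Sum.inr α) (Sum.inl aa)
        + C (Sum.inl y) (Sum.inr α) (Sum.inr β) * C (Sum.inr β) (Sum.inl x) (Sum.inl aa)))
      = ∑ β, (C (Sum.inr α) (Sum.inl x) (Sum.inr β) * FF G C β y z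
          - C (Sum.inr α) (Sum.inl y) (Sum.inr β) * FF G C β x z) := by
    refine Finset.sum_congr rfl fun β _ => ?_
    unfold FF
    rw [Finset.mul_sum, Finset.mul_sum, ← Finset.sum_sub_distrib]
    refine Finset.sum_congr rfl fun u _ => ?_
    rw [hsub β α u, hanti (Sum.inl y) (Sum.inr α) (Sum.inr β)]
    ring
  rw [hI, hJ] at h0
  linarith

/-- nondegeneracy cancellation -/
lemma inv_cancel {I : Type*} [Fintype I] [DecidableEq I]
    (G Ginv : I → I → ℝ) (hGsym : ∀ a b, G a b = G b a)
    (hGinv' : ∀ a b, ∑ c, Ginv a c * G c b = if a = b then 1 else 0)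
    (D : I → ℝ) (hD : ∀ c0, ∑ cc, G cc c0 * D cc = 0) : ∀ c, D c = 0 := by
  intro c
  calc D c = ∑ c0, (if c = c0 then (1:ℝ) else 0) * D c0 := by simp
    _ = ∑ c0, (∑ d, Ginv c d * G d c0) * D c0 :=
        Finset.sum_congr rfl fun c0 _ => by rw [hGinv' c c0]
    _ = ∑ d, Ginv c d * ∑ c0, G c0 d * D c0 := by
        simp only [Finset.sum_mul, Finset.mul_sum]
        rw [Finset.sum_comm]
        exact Finset.sum_congr rfl fun d _ => Finset.sum_congr rfl fun c0 _ => by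
          rw [hGsym d c0]; ring
    _ = 0 := Finset.sum_eq_zero fun d _ => by rw [hD d, mul_zero]

end aux

/-- for a real Lie algebra `𝔤 = 𝔪 ⊕ 𝔥` (indices `I` for `𝔪`, `J` for
the subalgebra `𝔥`) with structure constants `C` and an `Ad(H)`-invariant symmetric
nondegenerate matrix `G` (inverse `Ginv`), defining
`Γ^a_{bc} = -½ C^a_{bc} - ½ G^{ad}(G_{ec} C^e_{bd} + G_{eb} C^e_{cd})`,
one has `C_{αe}^c Γ_{ba}^e = C_{αa}^e Γ_{be}^c + C_{αb}^e Γ_{ea}^c + C_{αa}^β C_{βb}^c`. -/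
theorem christoffel_structure_identity
    {I J : Type*} [Fintype I] [Fintype J] [DecidableEq I] [DecidableEq J]
    (C : (I ⊕ J) → (I ⊕ J) → (I ⊕ J) → ℝ)
    (hanti : ∀ X Y Z, C X Y Z = - C Y X Z)
    (hjac : ∀ X Y Z W, ∑ V, (C X Y V * C V Z W + C Y Z V * C V X W
      + C Z X V * C V Y W) = 0)
    (hsub : ∀ (α β : J) (a : I), C (Sum.inr α) (Sum.inr β) (Sum.inl a) = 0)
    (G Ginv : I → I → ℝ)
    (hGsym : ∀ a b, G a b = G b a)
    (hGinv : ∀ a b, ∑ c, G a c * Ginv c b = if a = b then 1 else 0)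
    (hGinv' : ∀ a b, ∑ c, Ginv a c * G c b = if a = b then 1 else 0)
    (hAdH : ∀ (b c : I) (α : J), ∑ a, (G a b * C (Sum.inl c) (Sum.inr α) (Sum.inl a)
      + G a c * C (Sum.inl b) (Sum.inr α) (Sum.inl a)) = 0)
    (Γc : I → I → I → ℝ)
    (hΓ : ∀ a b c, Γc a b c = -(1/2) * C (Sum.inl b) (Sum.inl c) (Sum.inl a)
      - (1/2) * ∑ d, ∑ e, Ginv a d *
        (G e c * C (Sum.inl b) (Sum.inl d) (Sum.inl e)
          + G e b * C (Sum.inl c) (Sum.inl d) (Sum.inl e))) :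
    ∀ (α : J) (a b c : I),
      ∑ e, C (Sum.inr α) (Sum.inl e) (Sum.inl c) * Γc e b a
        = (∑ e, C (Sum.inr α) (Sum.inl a) (Sum.inl e) * Γc c b e)
          + (∑ e, C (Sum.inr α) (Sum.inl b) (Sum.inl e) * Γc c e a)
          + (∑ β : J, C (Sum.inr α) (Sum.inl a) (Sum.inr β)
              * C (Sum.inr β) (Sum.inl b) (Sum.inl c)) := by
  intro α a b c
  -- the lowered Christoffel symbol
  have hK : ∀ x y z : I, (∑ u, G u x * Γc u y z)
      = -(1/2) * (LL G C y z x + LL G C y x z + LL G C z x y) := by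
    intro x y z
    have hdel : ∀ d : I, (∑ u, G u x * Ginv u d) = if x = d then (1:ℝ) else 0 := by
      intro d
      rw [← hGinv x d]
      exact Finset.sum_congr rfl fun u _ => by rw [hGsym u x]
    have e1 : ∀ u : I, G u x * Γc u y z
        = -(1/2) * (G u x * C (Sum.inl y) (Sum.inl z) (Sum.inl u))
          - (1/2) * ∑ d, ∑ e, (G u x * Ginv u d) *
            (G e z * C (Sum.inl y) (Sum.inl d) (Sum.inl e)
              + G e y * C (Sum.inl z) (Sum.inl d) (Sum.inl e)) := by
      intro u
      have e2 : G u x * ∑ d, ∑ e, Ginv u d *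
          (G e z * C (Sum.inl y) (Sum.inl d) (Sum.inl e)
            + G e y * C (Sum.inl z) (Sum.inl d) (Sum.inl e))
          = ∑ d, ∑ e, (G u x * Ginv u d) *
            (G e z * C (Sum.inl y) (Sum.inl d) (Sum.inl e)
              + G e y * C (Sum.inl z) (Sum.inl d) (Sum.inl e)) := by
        rw [Finset.mul_sum]
        exact Finset.sum_congr rfl fun d _ => by
          rw [Finset.mul_sum]
          exact Finset.sum_congr rfl fun e _ => by ring
      calc G u x * Γc u y z
          = -(1/2) * (G u x * C (Sum.inl y) (Sum.inl z) (Sum.inl u))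
            - (1/2) * (G u x * ∑ d, ∑ e, Ginv u d *
              (G e z * C (Sum.inl y) (Sum.inl d) (Sum.inl e)
                + G e y * C (Sum.inl z) (Sum.inl d) (Sum.inl e))) := by
            rw [hΓ u y z]; ring
        _ = _ := by rw [e2]
    rw [Finset.sum_congr rfl fun u _ => e1 u, Finset.sum_sub_distrib]
    have p1 : (∑ u, -(1/2) * (G u x * C (Sum.inl y) (Sum.inl z) (Sum.inl u)))
        = -(1/2) * LL G C y z x := by
      unfold LL; rw [Finset.mul_sum]
    have p2 : (∑ u, (1/2:ℝ) * ∑ d, ∑ e, (G u x * Ginv u d) *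
          (G e z * C (Sum.inl y) (Sum.inl d) (Sum.inl e)
            + G e y * C (Sum.inl z) (Sum.inl d) (Sum.inl e)))
        = (1/2) * (LL G C y x z + LL G C z x y) := by
      rw [← Finset.mul_sum]
      congr 1
      rw [Finset.sum_comm]
      have h1 : ∀ d : I, (∑ u, ∑ e, (G u x * Ginv u d) *
            (G e z * C (Sum.inl y) (Sum.inl d) (Sum.inl e)
              + G e y * C (Sum.inl z) (Sum.inl d) (Sum.inl e)))
          = (if x = d then (1:ℝ) else 0) * ∑ e, (G e z * C (Sum.inl y) (Sum.inl d) (Sum.inl e)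
              + G e y * C (Sum.inl z) (Sum.inl d) (Sum.inl e)) := by
        intro d
        rw [← Finset.sum_mul_sum, hdel d]
      rw [Finset.sum_congr rfl fun d _ => h1 d]
      simp only [ite_mul, one_mul, zero_mul, Finset.sum_ite_eq, Finset.mem_univ, if_true]
      rw [Finset.sum_add_distrib]
      rfl
    rw [p1, p2]
    ring
  -- the transported terms
  have hT1 : ∀ c0 : I, (∑ cc, G cc c0 * ∑ e, C (Sum.inr α) (Sum.inl e) (Sum.inl cc) * Γc e b a)
      = (1/2) * ∑ e, C (Sum.inr α) (Sum.inl c0) (Sum.inl e)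
          * (LL G C b a e + LL G C b e a + LL G C a e b) := by
    intro c0
    calc (∑ cc, G cc c0 * ∑ e, C (Sum.inr α) (Sum.inl e) (Sum.inl cc) * Γc e b a)
        = ∑ e, FF G C α e c0 * Γc e b a := by
          simp only [Finset.mul_sum]
          rw [Finset.sum_comm]
          refine Finset.sum_congr rfl fun e _ => ?_
          unfold FF
          rw [Finset.sum_mul]
          exact Finset.sum_congr rfl fun cc _ => by ring
      _ = ∑ e, (- FF G C α c0 e) * Γc e b a :=
          Finset.sum_congr rfl fun e _ => by rw [FF_anti G C hanti hAdH α e c0]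
      _ = ∑ e, ∑ u, C (Sum.inr α) (Sum.inl c0) (Sum.inl u) * (G u e * (- Γc e b a)) := by
          refine Finset.sum_congr rfl fun e _ => ?_
          unfold FF
          rw [neg_mul, Finset.sum_mul, ← Finset.sum_neg_distrib]
          exact Finset.sum_congr rfl fun u _ => by ring
      _ = ∑ u, ∑ e, C (Sum.inr α) (Sum.inl c0) (Sum.inl u) * (G u e * (- Γc e b a)) :=
          Finset.sum_comm
      _ = ∑ u, C (Sum.inr α) (Sum.inl c0) (Sum.inl u)
            * ((1/2) * (LL G C b a u + LL G C b u a + LL G C a u b)) := by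
          refine Finset.sum_congr rfl fun u _ => ?_
          rw [← Finset.mul_sum]
          congr 1
          have h2 : (∑ e, G u e * (- Γc e b a)) = - ∑ e, G e u * Γc e b a := by
            rw [← Finset.sum_neg_distrib]
            exact Finset.sum_congr rfl fun e _ => by rw [hGsym u e]; ring
          rw [h2, hK u b a]
          ring
      _ = (1/2) * ∑ e, C (Sum.inr α) (Sum.inl c0) (Sum.inl e)
            * (LL G C b a e + LL G C b e a + LL G C a e b) := by
          rw [Finset.mul_sum]
          exact Finset.sum_congr rfl fun u _ => by ring
  have hT2 : ∀ c0 : I, (∑ cc, G cc c0 * ∑ e, C (Sum.inr α) (Sum.inl a) (Sum.inl e) * Γc cc b e)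
      = -(1/2) * ∑ e, C (Sum.inr α) (Sum.inl a) (Sum.inl e)
          * (LL G C b e c0 + LL G C b c0 e + LL G C e c0 b) := by
    intro c0
    calc (∑ cc, G cc c0 * ∑ e, C (Sum.inr α) (Sum.inl a) (Sum.inl e) * Γc cc b e)
        = ∑ e, C (Sum.inr α) (Sum.inl a) (Sum.inl e) * ∑ cc, G cc c0 * Γc cc b e := by
          simp only [Finset.mul_sum]
          rw [Finset.sum_comm]
          exact Finset.sum_congr rfl fun e _ => Finset.sum_congr rfl fun cc _ => by ring
      _ = ∑ e, C (Sum.inr α) (Sum.inl a) (Sum.inl e)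
            * (-(1/2) * (LL G C b e c0 + LL G C b c0 e + LL G C e c0 b)) :=
          Finset.sum_congr rfl fun e _ => by rw [hK c0 b e]
      _ = -(1/2) * ∑ e, C (Sum.inr α) (Sum.inl a) (Sum.inl e)
            * (LL G C b e c0 + LL G C b c0 e + LL G C e c0 b) := by
          rw [Finset.mul_sum]
          exact Finset.sum_congr rfl fun e _ => by ring
  have hT3 : ∀ c0 : I, (∑ cc, G cc c0 * ∑ e, C (Sum.inr α) (Sum.inl b) (Sum.inl e) * Γc cc e a)
      = -(1/2) * ∑ e, C (Sum.inr α) (Sum.inl b) (Sum.inl e)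
          * (LL G C e a c0 + LL G C e c0 a + LL G C a c0 e) := by
    intro c0
    calc (∑ cc, G cc c0 * ∑ e, C (Sum.inr α) (Sum.inl b) (Sum.inl e) * Γc cc e a)
        = ∑ e, C (Sum.inr α) (Sum.inl b) (Sum.inl e) * ∑ cc, G cc c0 * Γc cc e a := by
          simp only [Finset.mul_sum]
          rw [Finset.sum_comm]
          exact Finset.sum_congr rfl fun e _ => Finset.sum_congr rfl fun cc _ => by ring
      _ = ∑ e, C (Sum.inr α) (Sum.inl b) (Sum.inl e)
            * (-(1/2) * (LL G C e a c0 + LL G C e c0 a + LL G C a c0 e)) :=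
          Finset.sum_congr rfl fun e _ => by rw [hK c0 e a]
      _ = -(1/2) * ∑ e, C (Sum.inr α) (Sum.inl b) (Sum.inl e)
            * (LL G C e a c0 + LL G C e c0 a + LL G C a c0 e) := by
          rw [Finset.mul_sum]
          exact Finset.sum_congr rfl fun e _ => by ring
  have hT4 : ∀ c0 : I, (∑ cc, G cc c0 * ∑ β, C (Sum.inr α) (Sum.inl a) (Sum.inr β)
        * C (Sum.inr β) (Sum.inl b) (Sum.inl cc))
      = ∑ β, C (Sum.inr α) (Sum.inl a) (Sum.inr β) * FF G C β b c0 := by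
    intro c0
    simp only [Finset.mul_sum]
    rw [Finset.sum_comm]
    refine Finset.sum_congr rfl fun β _ => ?_
    unfold FF
    rw [Finset.mul_sum]
    exact Finset.sum_congr rfl fun cc _ => by ring
  -- the lowered identity
  have hlow : ∀ c0 : I,
      (1/2) * (∑ e, C (Sum.inr α) (Sum.inl c0) (Sum.inl e)
          * (LL G C b a e + LL G C b e a + LL G C a e b))
      + (1/2) * (∑ e, C (Sum.inr α) (Sum.inl a) (Sum.inl e)
          * (LL G C b e c0 + LL G C b c0 e + LL G C e c0 b))
      + (1/2) * (∑ e, C (Sum.inr α) (Sum.inl b) (Sum.inl e)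
          * (LL G C e a c0 + LL G C e c0 a + LL G C a c0 e))
      - (∑ β, C (Sum.inr α) (Sum.inl a) (Sum.inr β) * FF G C β b c0) = 0 := by
    intro c0
    have J1 := lemJac C hanti hjac hsub G hGsym hAdH α b a c0
    have J2 := lemJac C hanti hjac hsub G hGsym hAdH α b c0 a
    have J3 := lemJac C hanti hjac hsub G hGsym hAdH α a c0 b
    rw [Finset.sum_sub_distrib] at J1 J2 J3
    have c1 : (∑ e, C (Sum.inr α) (Sum.inl c0) (Sum.inl e) * LL G C b e a)
        = - ∑ e, C (Sum.inr α) (Sum.inl c0) (Sum.inl e) * LL G C e b a := by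
      rw [← Finset.sum_neg_distrib]
      exact Finset.sum_congr rfl fun e _ => by rw [LL_anti G C hanti b e a]; ring
    have c2 : (∑ e, C (Sum.inr α) (Sum.inl c0) (Sum.inl e) * LL G C a e b)
        = - ∑ e, C (Sum.inr α) (Sum.inl c0) (Sum.inl e) * LL G C e a b := by
      rw [← Finset.sum_neg_distrib]
      exact Finset.sum_congr rfl fun e _ => by rw [LL_anti G C hanti a e b]; ring
    have c3 : (∑ e, C (Sum.inr α) (Sum.inl a) (Sum.inl e) * LL G C b e c0)
        = - ∑ e, C (Sum.inr α) (Sum.inl a) (Sum.inl e) * LL G C e b c0 := by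
      rw [← Finset.sum_neg_distrib]
      exact Finset.sum_congr rfl fun e _ => by rw [LL_anti G C hanti b e c0]; ring
    have d1 : (∑ β, C (Sum.inr α) (Sum.inl b) (Sum.inr β) * FF G C β c0 a)
        = - ∑ β, C (Sum.inr α) (Sum.inl b) (Sum.inr β) * FF G C β a c0 := by
      rw [← Finset.sum_neg_distrib]
      exact Finset.sum_congr rfl fun β _ => by rw [FF_anti G C hanti hAdH β c0 a]; ring
    have d2 : (∑ β, C (Sum.inr α) (Sum.inl a) (Sum.inr β) * FF G C β c0 b)
        = - ∑ β, C (Sum.inr α) (Sum.inl a) (Sum.inr β) * FF G C β b c0 := by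
      rw [← Finset.sum_neg_distrib]
      exact Finset.sum_congr rfl fun β _ => by rw [FF_anti G C hanti hAdH β c0 b]; ring
    have d3 : (∑ β, C (Sum.inr α) (Sum.inl c0) (Sum.inr β) * FF G C β a b)
        = - ∑ β, C (Sum.inr α) (Sum.inl c0) (Sum.inr β) * FF G C β b a := by
      rw [← Finset.sum_neg_distrib]
      exact Finset.sum_congr rfl fun β _ => by rw [FF_anti G C hanti hAdH β a b]; ring
    simp only [mul_add, Finset.sum_add_distrib]
    rw [c1, c2, c3]
    linarith [J1, J2, J3, d1, d2, d3]
  -- combine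
  have hD : ∀ c0 : I, (∑ cc, G cc c0 *
      ((∑ e, C (Sum.inr α) (Sum.inl e) (Sum.inl cc) * Γc e b a)
        - ((∑ e, C (Sum.inr α) (Sum.inl a) (Sum.inl e) * Γc cc b e)
          + (∑ e, C (Sum.inr α) (Sum.inl b) (Sum.inl e) * Γc cc e a)
          + (∑ β : J, C (Sum.inr α) (Sum.inl a) (Sum.inr β)
              * C (Sum.inr β) (Sum.inl b) (Sum.inl cc))))) = 0 := by
    intro c0
    simp only [mul_sub, mul_add, Finset.sum_sub_distrib, Finset.sum_add_distrib]
    rw [hT1 c0, hT2 c0, hT3 c0, hT4 c0]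
    linarith [hlow c0]
  have key : (∑ e, C (Sum.inr α) (Sum.inl e) (Sum.inl c) * Γc e b a)
      - ((∑ e, C (Sum.inr α) (Sum.inl a) (Sum.inl e) * Γc c b e)
        + (∑ e, C (Sum.inr α) (Sum.inl b) (Sum.inl e) * Γc c e a)
        + (∑ β : J, C (Sum.inr α) (Sum.inl a) (Sum.inr β)
            * C (Sum.inr β) (Sum.inl b) (Sum.inl c))) = 0 :=
    inv_cancel G Ginv hGsym hGinv'
      (fun cc => (∑ e, C (Sum.inr α) (Sum.inl e) (Sum.inl cc) * Γc e b a)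
        - ((∑ e, C (Sum.inr α) (Sum.inl a) (Sum.inl e) * Γc cc b e)
          + (∑ e, C (Sum.inr α) (Sum.inl b) (Sum.inl e) * Γc cc e a)
          + (∑ β : J, C (Sum.inr α) (Sum.inl a) (Sum.inr β)
              * C (Sum.inr β) (Sum.inl b) (Sum.inl cc)))) hD c
  linarith [key]
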